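/- Let S be an isometry on a Hilbert space H such that S*ⁿ → 0 strongly, and let T be a bounded operator with S* T S = T. Then for every x ∈ H, the sequence S*ⁿ T S ⁿ x equals T x for all n, and if additionally T = K* L where K, L satisfy S* K = K S and S* L = L S (Hankel-type intertwining), then T = 0. -/
import Mathlib


open ContinuousLinearMap Filter

theorem hankel_product_toeplitz_eq_zero {H : Type*} [NormedAddCommGroup H]
    [InnerProductSpace ℂ H] [CompleteSpace H] (S K L T : H →L[ℂ] H)
    (hS : adjoint S * S = 1)
    (hSstrong : ∀ x : H, Tendsto (fun n : ℕ => ((adjoint S) ^ n) x) atTop (nhds 0))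
    (hT : adjoint S * T * S = T)
    (hK : adjoint S * K = K * S) (hL : adjoint S * L = L * S)
    (hTKL : T = adjoint K * L) :
    (∀ (n : ℕ) (x : H), ((adjoint S) ^ n * T * S ^ n) x = T x) ∧ T = 0 := by
  set A := adjoint S with hA
  -- S is an isometry
  have hSiso : ∀ y : H, ‖S y‖ = ‖y‖ :=
    (norm_map_iff_adjoint_comp_self S).mpr hS
  have hSniso : ∀ (n : ℕ) (y : H), ‖(S ^ n) y‖ = ‖y‖ := by
    intro n
    induction n with
    | zero => intro y; simp
    | succ n ih =>
      intro y
      rw [pow_succ']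
      calc ‖(S * S ^ n) y‖ = ‖S ((S ^ n) y)‖ := rfl
        _ = ‖(S ^ n) y‖ := hSiso _
        _ = ‖y‖ := ih y
  have hpow : ∀ n : ℕ, A ^ n * T * S ^ n = T := by
    intro n
    induction n with
    | zero => simp
    | succ n ih =>
      rw [pow_succ A, pow_succ' S]
      have : A ^ n * A * T * (S * S ^ n) = A ^ n * (A * T * S) * S ^ n := by
        noncomm_ring
      rw [this, hT, ih]
  -- adjoint of hK
  have hK' : A * adjoint K = adjoint K * S := by
    have := congrArg adjoint hK
    simp only [hA, mul_def, adjoint_comp, adjoint_adjoint] at this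
    exact this.symm
  have hAK : ∀ n : ℕ, A ^ n * adjoint K = adjoint K * S ^ n := by
    intro n
    induction n with
    | zero => simp
    | succ n ih =>
      rw [pow_succ' A, pow_succ' S, mul_assoc, ih, ← mul_assoc, hK', mul_assoc]
  have hLn : ∀ n : ℕ, L * S ^ n = A ^ n * L := by
    intro n
    induction n with
    | zero => simp
    | succ n ih =>
      rw [pow_succ S, pow_succ A]
      calc L * (S ^ n * S) = (L * S ^ n) * S := by noncomm_ring
        _ = A ^ n * (L * S) := by rw [ih]; noncomm_ring
        _ = A ^ n * (A * L) := by rw [← hL]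
        _ = A ^ n * A * L := by noncomm_ring
  have key : ∀ n : ℕ, T = adjoint K * (S ^ n * (A ^ n * L)) := by
    intro n
    calc T = A ^ n * T * S ^ n := (hpow n).symm
      _ = A ^ n * (adjoint K * L) * S ^ n := by rw [hTKL]
      _ = (A ^ n * adjoint K) * (L * S ^ n) := by noncomm_ring
      _ = (adjoint K * S ^ n) * (A ^ n * L) := by rw [hAK, hLn]
      _ = adjoint K * (S ^ n * (A ^ n * L)) := by noncomm_ring
  have hT0 : ∀ x : H, T x = 0 := by
    intro x
    have hbound : ∀ n : ℕ, ‖T x‖ ≤ ‖adjoint K‖ * ‖(A ^ n) (L x)‖ := by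
      intro n
      calc ‖T x‖ = ‖(adjoint K) ((S ^ n) ((A ^ n) (L x)))‖ := by rw [key n]; rfl
        _ ≤ ‖adjoint K‖ * ‖(S ^ n) ((A ^ n) (L x))‖ := (adjoint K).le_opNorm _
        _ = ‖adjoint K‖ * ‖(A ^ n) (L x)‖ := by rw [hSniso]
    have htend : Tendsto (fun n : ℕ => ‖adjoint K‖ * ‖(A ^ n) (L x)‖) atTop (nhds 0) := by
      have := (hSstrong (L x)).norm
      simpa using this.const_mul ‖adjoint K‖
    have : ‖T x‖ ≤ 0 := ge_of_tendsto' htend hbound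
    simpa using le_antisymm this (norm_nonneg _)
  refine ⟨fun n x => by rw [hpow n], ?_⟩
  ext x
  exact hT0 x
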